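/- Let G be a signed graph whose underlying graph is chordal, i.e., every cycle of length at least four has a chord. Then the dual Ḡ of G is balanced if and only if G contains no positive triangle, i.e., no 3-cycle with an even number of negative edges. -/

import Mathlib

/-- Sign convention: `true` = positive edge, `false` = negative edge.
An edge `e` is *consistent* with the partition `(A, Aᶜ)` of the vertex set if it is
positive when both endpoints lie on the same side and negative otherwise. -/
def SignConsistent {V : Type*} (sign : Sym2 V → Bool) (A : Set V) (e : Sym2 V) : Prop :=
  ∀ u v : V, e = s(u, v) → (sign e = true ↔ (u ∈ A ↔ v ∈ A))

/-- The number of edges of the balanced subgraph induced by the partition `(A, Aᶜ)`. -/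
noncomputable def balCount {V : Type*} (G : SimpleGraph V) (sign : Sym2 V → Bool)
    (A : Set V) : ℕ :=
  {e | e ∈ G.edgeSet ∧ SignConsistent sign A e}.ncard

/-- `beta G sign` = β(G): the maximum number of edges of a balanced subgraph of the
signed graph `(G, sign)`. -/
noncomputable def beta {V : Type*} (G : SimpleGraph V) (sign : Sym2 V → Bool) : ℕ :=
  sSup {n | ∃ A : Set V, n = balCount G sign A}

/-- The Poljak–Turzík bound `pt G = m/2 + (n − t)/4`, where `m` is the number of edges,
`n` the number of vertices and `t` the number of connected components. -/
noncomputable def pt {V : Type*} (G : SimpleGraph V) : ℚ :=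
  (G.edgeSet.ncard : ℚ) / 2 +
    ((Nat.card V : ℚ) - (Nat.card G.ConnectedComponent : ℚ)) / 4

/-- β of the signed subgraph induced on the vertex set `U`. -/
noncomputable def betaOn {V : Type*} (G : SimpleGraph V) (sign : Sym2 V → Bool)
    (U : Set V) : ℕ :=
  beta (G.induce U) (fun e => sign (Sym2.map Subtype.val e))

/-- `pt` of the subgraph induced on the vertex set `U`. -/
noncomputable def ptOn {V : Type*} (G : SimpleGraph V) (U : Set V) : ℚ :=
  pt (G.induce U)

/-- The signed graph `(G, sign)` is balanced: some partition `(A, Aᶜ)` is consistent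
with every edge. -/
def IsBalanced {V : Type*} (G : SimpleGraph V) (sign : Sym2 V → Bool) : Prop :=
  ∃ A : Set V, ∀ u v : V, G.Adj u v → (sign s(u, v) = true ↔ (u ∈ A ↔ v ∈ A))

/-- `a`, `b`, `c` form a positive triangle: all three edges exist and the number of
negative edges among them is even. -/
def PositiveTriangle {V : Type*} (G : SimpleGraph V) (sign : Sym2 V → Bool)
    (a b c : V) : Prop :=
  G.Adj a b ∧ G.Adj b c ∧ G.Adj c a ∧
    Even ((if sign s(a, b) then 0 else 1) + (if sign s(b, c) then 0 else 1) +
      (if sign s(c, a) then 0 else 1))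

/-- `X` is (the vertex set of) a connected component of `G − S`. -/
def IsCompOf {V : Type*} (G : SimpleGraph V) (S X : Set V) : Prop :=
  Disjoint X S ∧ (G.induce X).Connected ∧
    ∀ x ∈ X, ∀ y : V, G.Adj x y → y ∉ S → y ∈ X

/-- The neighborhood of a vertex set `X`. -/
def nbhd {V : Type*} (G : SimpleGraph V) (X : Set V) : Set V :=
  {v | v ∉ X ∧ ∃ x ∈ X, G.Adj x v}

/-- A graph is chordal: every cycle of length at least four has a chord, i.e. an edge
between two vertices of the cycle which is not an edge of the cycle. -/
def IsChordal {V : Type*} (G : SimpleGraph V) : Prop :=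
  ∀ (u : V) (w : G.Walk u u), w.IsCycle → 4 ≤ w.length →
    ∃ a b : V, a ∈ w.support ∧ b ∈ w.support ∧ G.Adj a b ∧ s(a, b) ∉ w.edges


open SimpleGraph


section Aux
variable {V : Type*} {G : SimpleGraph V}

/-- weight of a walk: sum over edges of (1 if sign is true else 0), in ZMod 2. -/
noncomputable def wsum (sign : Sym2 V → Bool) {u v : V} (w : G.Walk u v) : ZMod 2 :=
  (w.edges.map (fun e => if sign e then (1 : ZMod 2) else 0)).sum

lemma wsum_nil (sign : Sym2 V → Bool) {u : V} : wsum sign (Walk.nil : G.Walk u u) = 0 := rfl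

lemma wsum_cons (sign : Sym2 V → Bool) {u v w : V} (h : G.Adj u v) (p : G.Walk v w) :
    wsum sign (Walk.cons h p) = (if sign s(u, v) then (1 : ZMod 2) else 0) + wsum sign p := by
  simp [wsum]

lemma wsum_append (sign : Sym2 V → Bool) {u v w : V} (p : G.Walk u v) (q : G.Walk v w) :
    wsum sign (p.append q) = wsum sign p + wsum sign q := by
  simp [wsum, Walk.edges_append]

lemma wsum_copy (sign : Sym2 V → Bool) {u v u' v' : V} (p : G.Walk u v) (hu : u = u') (hv : v = v') :
    wsum sign (p.copy hu hv) = wsum sign p := by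
  simp [wsum, Walk.edges_copy]

lemma wsum_reverse (sign : Sym2 V → Bool) {u v : V} (p : G.Walk u v) :
    wsum sign p.reverse = wsum sign p := by
  simp [wsum, Walk.edges_reverse, List.map_reverse, List.sum_reverse]

lemma wsum_rotate [DecidableEq V] (sign : Sym2 V → Bool) {u v : V} (c : G.Walk v v)
    (h : u ∈ c.support) : wsum sign (c.rotate u h) = wsum sign c :=
  ((c.rotate_edges u h).perm.map _).sum_eq

lemma length_rotate [DecidableEq V] {u v : V} (c : G.Walk v v) (h : u ∈ c.support) :
    (c.rotate u h).length = c.length := by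
  rw [← Walk.length_edges, ← Walk.length_edges]
  exact (c.rotate_edges u h).perm.length_eq

/-- In a path from v to u, an edge s(u,v) forces length 1. -/
lemma path_edge_end {u v : V} (p : G.Walk v u) (hp : p.IsPath) (he : s(u, v) ∈ p.edges) :
    p.length = 1 := by
  cases p with
  | nil => simp at he
  | cons h r =>
    rename_i x
    rw [Walk.edges_cons, List.mem_cons] at he
    rcases he with he | he
    · have hx : u = x := by
        rcases Sym2.eq_iff.mp he with ⟨h1, h2⟩ | ⟨h1, h2⟩
        · exact h1.trans h2
        · exact h1
      subst hx
      have hrp : r.IsPath := ((Walk.cons_isPath_iff h r).mp hp).1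
      cases r with
      | nil => simp
      | cons h' r' =>
        exact absurd r'.end_mem_support ((Walk.cons_isPath_iff h' r').mp hrp).2
    · exfalso
      have : v ∈ r.support := Walk.snd_mem_support_of_mem_edges r he
      exact ((Walk.cons_isPath_iff h r).mp hp).2 this

lemma edge_of_length_one {u v : V} (p : G.Walk u v) (h : p.length = 1) :
    s(u, v) ∈ p.edges := by
  cases p with
  | nil => simp at h
  | cons h' r =>
    have : r.length = 0 := by simpa using h
    have := Walk.eq_of_length_eq_zero this
    subst this
    simp

lemma end_mem_tail {u v : V} (w : G.Walk u v) (hw : w.length ≠ 0) : v ∈ w.support.tail := by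
  cases w with
  | nil => simp at hw
  | cons h p => simpa using p.end_mem_support

lemma zmod2_add_self (a : ZMod 2) : a + a = 0 := by revert a; decide

lemma cycleSum [DecidableEq V] (sign : Sym2 V → Bool) (hch : IsChordal G)
    (Htri : ∀ a b c : V, G.Adj a b → G.Adj b c → G.Adj c a →
      (if sign s(a, b) then (1 : ZMod 2) else 0) + (if sign s(b, c) then (1 : ZMod 2) else 0)
        + (if sign s(c, a) then (1 : ZMod 2) else 0) = 0) :
    ∀ (n : ℕ) (u : V) (w : G.Walk u u), w.IsCycle → w.length ≤ n → wsum sign w = 0 := by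
  intro n
  induction n with
  | zero => intro u w hc hl; have := hc.three_le_length; omega
  | succ n IH =>
    intro u w hc hl
    rcases eq_or_lt_of_le hc.three_le_length with h3 | h4
    · -- length exactly 3: a triangle
      clear hl hc
      cases w with
      | nil => simp at h3
      | cons h1 p =>
        cases p with
        | nil => simp at h3
        | cons h2 q =>
          cases q with
          | nil => simp at h3
          | cons h3' r =>
            cases r with
            | nil =>
              rename_i b c
              have := Htri u b c h1 h2 h3'
              simp only [wsum_cons, wsum_nil, add_zero, ← add_assoc]
              exact this
            | cons h4' s =>
              exfalso; simp [Walk.length_cons] at h3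
    · -- length ≥ 4: use a chord
      obtain ⟨a, b, ha, hb, hab, hnab⟩ := hch u w hc (by omega)
      have hane : b ≠ a := hab.ne'
      have hcyc : (w.rotate a ha).IsCycle := hc.rotate ha
      have hlenc : (w.rotate a ha).length = w.length := length_rotate w ha
      have hsumc : wsum sign (w.rotate a ha) = wsum sign w := wsum_rotate sign w ha
      have hnab' : s(a, b) ∉ (w.rotate a ha).edges := fun hmem =>
        hnab ((w.rotate_edges a ha).perm.mem_iff.mp hmem)
      have hbc : b ∈ (w.rotate a ha).support := by
        have hbt : b ∈ w.support.tail := by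
          rw [Walk.support_eq_cons w] at hb
          rcases List.mem_cons.mp hb with rfl | h
          · exact end_mem_tail w (by omega)
          · exact h
        have h2 : b ∈ (w.rotate a ha).support.tail := (w.support_rotate a ha).perm.mem_iff.mpr hbt
        rw [Walk.support_eq_cons (w.rotate a ha)]
        exact List.mem_cons_of_mem _ h2
      set c : G.Walk a a := w.rotate a ha with hcdef
      set p := c.takeUntil b hbc with hpdef
      set q := c.dropUntil b hbc with hqdef
      have hspec : p.append q = c := c.take_spec hbc
      have hsupp : c.support = p.support ++ q.support.tail := by
        rw [← hspec, Walk.support_append]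
      have htail : c.support.tail = p.support.tail ++ q.support.tail := by
        rw [Walk.support_eq_cons c, Walk.support_eq_cons p, List.cons_append] at hsupp
        have := congrArg List.tail hsupp
        simpa only [List.tail_cons] using this
      have hnd : (p.support.tail ++ q.support.tail).Nodup := htail ▸ hcyc.support_nodup
      obtain ⟨hpnd, hqnd, hdisj⟩ := List.nodup_append.mp hnd
      have hedges : c.edges = p.edges ++ q.edges := by rw [← hspec, Walk.edges_append]
      have hlpq : p.length + q.length = c.length := by rw [← hspec, Walk.length_append]
      have hp0 : p.length ≠ 0 := fun h0 => hane (Walk.eq_of_length_eq_zero h0).symm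
      have hq0 : q.length ≠ 0 := fun h0 => hane (Walk.eq_of_length_eq_zero h0)
      have hp1 : p.length ≠ 1 := by
        intro h1
        apply hnab'
        rw [hedges, List.mem_append]
        exact Or.inl (edge_of_length_one p h1)
      have hq1 : q.length ≠ 1 := by
        intro h1
        apply hnab'
        rw [hedges, List.mem_append]
        right
        rw [Sym2.eq_swap]
        exact edge_of_length_one q h1
      have hap : a ∉ p.support.tail := fun hmem => hdisj _ hmem _ (end_mem_tail q hq0) rfl
      have hbq : b ∉ q.support.tail := fun hmem => hdisj _ (end_mem_tail p hp0) _ hmem rfl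
      have hppath : p.IsPath := by
        rw [Walk.isPath_def, Walk.support_eq_cons p]
        exact List.nodup_cons.mpr ⟨hap, hpnd⟩
      have hqpath : q.IsPath := by
        rw [Walk.isPath_def, Walk.support_eq_cons q]
        exact List.nodup_cons.mpr ⟨hbq, hqnd⟩
      have hc1 : (Walk.cons hab p.reverse).IsCycle := by
        rw [Walk.cons_isCycle_iff]
        refine ⟨hppath.reverse, ?_⟩
        rw [Walk.edges_reverse, List.mem_reverse]
        intro hmem
        exact hnab' (by rw [hedges, List.mem_append]; exact Or.inl hmem)
      have hc2 : (Walk.cons hab q).IsCycle := by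
        rw [Walk.cons_isCycle_iff]
        refine ⟨hqpath, ?_⟩
        intro hmem
        exact hnab' (by rw [hedges, List.mem_append]; exact Or.inr hmem)
      have hb1 : (Walk.cons hab p.reverse).length ≤ n := by
        simp only [Walk.length_cons, Walk.length_reverse]
        omega
      have hb2 : (Walk.cons hab q).length ≤ n := by
        simp only [Walk.length_cons]
        omega
      have e1 := IH a (Walk.cons hab p.reverse) hc1 hb1
      have e2 := IH a (Walk.cons hab q) hc2 hb2
      rw [wsum_cons, wsum_reverse] at e1
      rw [wsum_cons] at e2
      rw [← hsumc, ← hspec, wsum_append]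
      set x := (if sign s(a, b) then (1 : ZMod 2) else 0)
      have hwp : wsum sign p = x := by
        have := zmod2_add_self x
        calc wsum sign p = x + (x + wsum sign p) := by rw [← add_assoc, this, zero_add]
        _ = x + 0 := by rw [e1]
        _ = x := add_zero x
      have hwq : wsum sign q = x := by
        calc wsum sign q = x + (x + wsum sign q) := by rw [← add_assoc, zmod2_add_self, zero_add]
        _ = x + 0 := by rw [e2]
        _ = x := add_zero x
      rw [hwp, hwq, zmod2_add_self]

end Aux

section Main
variable {V : Type*} {G : SimpleGraph V}

lemma closedSum [DecidableEq V] (sign : Sym2 V → Bool) (hch : IsChordal G)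
    (Htri : ∀ a b c : V, G.Adj a b → G.Adj b c → G.Adj c a →
      (if sign s(a, b) then (1 : ZMod 2) else 0) + (if sign s(b, c) then (1 : ZMod 2) else 0)
        + (if sign s(c, a) then (1 : ZMod 2) else 0) = 0) :
    ∀ (n : ℕ) (u : V) (w : G.Walk u u), w.length ≤ n → wsum sign w = 0 := by
  intro n
  induction n with
  | zero =>
    intro u w hl
    cases w with
    | nil => rfl
    | cons h p => simp [Walk.length_cons] at hl
  | succ n IH =>
    intro u w hl
    cases w with
    | nil => rfl
    | cons h p =>
      rename_i v
      rw [Walk.length_cons] at hl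
      have hu : u ∈ p.support := p.end_mem_support
      set p1 := p.takeUntil u hu with hp1def
      set p2 := p.dropUntil u hu with hp2def
      have hspec : p1.append p2 = p := p.take_spec hu
      have hlen12 : p1.length + p2.length = p.length := by rw [← hspec, Walk.length_append]
      have h2 : wsum sign p2 = 0 := IH u p2 (by omega)
      have key : (if sign s(u, v) then (1 : ZMod 2) else 0) + wsum sign p1 = 0 := by
        have hcnt : p1.support.count u = 1 := p.count_support_takeUntil_eq_one hu
        by_cases hnd : p1.support.Nodup
        · have hp1pos : p1.length ≠ 0 := fun h0 => h.ne' (Walk.eq_of_length_eq_zero h0)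
          by_cases hone : p1.length = 1
          · -- back-and-forth on one edge
            have hedge : s(v, u) ∈ p1.edges := edge_of_length_one p1 hone
            have hlen1 : p1.edges.length = 1 := by rw [Walk.length_edges]; exact hone
            obtain ⟨e, he⟩ := List.length_eq_one_iff.mp hlen1
            rw [he, List.mem_singleton] at hedge
            have : wsum sign p1 = (if sign s(u, v) then (1 : ZMod 2) else 0) := by
              rw [wsum, he, ← hedge, Sym2.eq_swap]
              simp
            rw [this, zmod2_add_self]
          · -- a genuine cycle
            have hpath : p1.IsPath := Walk.isPath_def p1 |>.mpr hnd
            have hcyc : (Walk.cons h p1).IsCycle := by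
              rw [Walk.cons_isCycle_iff]
              exact ⟨hpath, fun hmem => hone (path_edge_end p1 hpath hmem)⟩
            have := cycleSum sign hch Htri (Walk.cons h p1).length u (Walk.cons h p1) hcyc le_rfl
            rwa [wsum_cons] at this
        · -- a repeated internal vertex: rotate and split
          obtain ⟨x, hx⟩ := List.exists_duplicate_iff_not_nodup.mpr hnd
          have hx2 : 2 ≤ p1.support.count x := List.duplicate_iff_two_le_count.mp hx
          have hxu : x ≠ u := fun he => by rw [he, hcnt] at hx2; omega
          have hxc : x ∈ (Walk.cons h p1).support := by
            rw [Walk.support_cons]; exact List.mem_cons_of_mem _ hx.mem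
          set c := (Walk.cons h p1).rotate x hxc with hcdef
          have hsumc : wsum sign c = (if sign s(u, v) then (1 : ZMod 2) else 0) + wsum sign p1 := by
            rw [hcdef, wsum_rotate, wsum_cons]
          have hlenc : c.length = p1.length + 1 := by
            rw [hcdef, length_rotate, Walk.length_cons]
          have hcount : 2 ≤ c.support.tail.count x := by
            have hperm := (Walk.cons h p1).support_rotate x hxc
            rw [hperm.perm.count_eq]
            simpa [Walk.support_cons] using hx2
          suffices hc0 : wsum sign c = 0 by rw [← hsumc]; exact hc0
          cases hcc : c with
          | nil => rw [hcc] at hlenc; simp at hlenc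
          | cons h'' q =>
            rename_i y
            have hyq : x ∈ q.support := q.end_mem_support
            set q1 := q.takeUntil x hyq with hq1def
            set q2 := q.dropUntil x hyq with hq2def
            have hqspec : q1.append q2 = q := q.take_spec hyq
            have hqlen : q1.length + q2.length = q.length := by rw [← hqspec, Walk.length_append]
            have hclen : q.length + 1 = c.length := by rw [hcc, Walk.length_cons]
            have hcnt1 : q1.support.count x = 1 := q.count_support_takeUntil_eq_one hyq
            have hq2pos : q2.length ≠ 0 := by
              intro h0
              have hq2nil : q2.support.tail = [] := by
                have : q2.support.length = 1 := by rw [Walk.length_support, h0]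
                cases hsupp2 : q2.support with
                | nil => simp [hsupp2] at this
                | cons a l => rw [hsupp2] at this; simp at this; simp [this]
              have hqs : q.support = q1.support ++ q2.support.tail := by
                rw [← hqspec, Walk.support_append]
              have : c.support.tail = q.support := by rw [hcc, Walk.support_cons, List.tail_cons]
              rw [this, hqs, List.count_append, hcnt1, hq2nil] at hcount
              simp at hcount
            have hb1 : (Walk.cons h'' q1).length ≤ n := by
              rw [Walk.length_cons]; omega
            have hb2 : q2.length ≤ n := by omega
            have e1 := IH x (Walk.cons h'' q1) hb1
            have e2 := IH x q2 hb2
            rw [wsum_cons, ← hqspec, wsum_append, e2, add_zero, ← wsum_cons]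
            exact e1
      calc wsum sign (Walk.cons h p)
          = (if sign s(u, v) then (1 : ZMod 2) else 0) + (wsum sign p1 + wsum sign p2) := by
            rw [wsum_cons, ← hspec, wsum_append]
        _ = 0 := by rw [h2, add_zero, key]

end Main




/-- If the underlying graph of a signed graph `G` is chordal, then the
dual of `G` is balanced if and only if `G` contains no positive triangle. -/
theorem stmt3 {V : Type*} [Fintype V] (G : SimpleGraph V) (sign : Sym2 V → Bool)
    (hchordal : IsChordal G) :
    IsBalanced G (fun e => !sign e) ↔
      ¬ ∃ a b c : V, PositiveTriangle G sign a b c := by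
  classical
  constructor
  · rintro ⟨A, hA⟩ ⟨a, b, c, hab, hbc, hca, heven⟩
    have H1 := hA a b hab
    have H2 := hA b c hbc
    have H3 := hA c a hca
    cases hs1 : sign s(a, b) <;> cases hs2 : sign s(b, c) <;> cases hs3 : sign s(c, a) <;>
      simp [hs1, hs2, hs3] at H1 H2 H3 heven <;>
      first
        | exact absurd heven (by decide)
        | tauto
  · intro hno
    have Htri : ∀ a b c : V, G.Adj a b → G.Adj b c → G.Adj c a →
        (if sign s(a, b) then (1 : ZMod 2) else 0) + (if sign s(b, c) then (1 : ZMod 2) else 0)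
          + (if sign s(c, a) then (1 : ZMod 2) else 0) = 0 := by
      intro a b c h1 h2 h3
      have hnpt : ¬ PositiveTriangle G sign a b c := fun hpt => hno ⟨a, b, c, hpt⟩
      cases hs1 : sign s(a, b) <;> cases hs2 : sign s(b, c) <;> cases hs3 : sign s(c, a) <;>
        first
          | decide
          | exact absurd ⟨h1, h2, h3, by rw [hs1, hs2, hs3]; decide⟩ hnpt
    have hrep : ∀ v : V, G.Reachable (Quot.out (G.connectedComponentMk v)) v := fun v =>
      ConnectedComponent.exact (Quot.out_eq _)
    let gw : ∀ v : V, G.Walk (Quot.out (G.connectedComponentMk v)) v := fun v => (hrep v).some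
    let g : V → ZMod 2 := fun v => wsum sign (gw v)
    refine ⟨{x | g x = 1}, ?_⟩
    intro u v huv
    have hrepeq : Quot.out (G.connectedComponentMk u) = Quot.out (G.connectedComponentMk v) := by
      rw [ConnectedComponent.sound huv.reachable]
    have hW := closedSum sign hchordal Htri
      ((gw u).append (Walk.cons huv ((gw v).copy hrepeq.symm rfl).reverse)).length
      _ ((gw u).append (Walk.cons huv ((gw v).copy hrepeq.symm rfl).reverse)) le_rfl
    rw [wsum_append, wsum_cons, wsum_reverse, wsum_copy] at hW
    have hkey : (if sign s(u, v) then (1 : ZMod 2) else 0) = g u + g v := by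
      have hz : ∀ a b c : ZMod 2, a + (c + b) = 0 → c = a + b := by decide
      exact hz _ _ _ hW
    show (!sign s(u, v)) = true ↔ (g u = 1 ↔ g v = 1)
    cases hs : sign s(u, v) with
    | false =>
      rw [hs] at hkey
      norm_num at hkey
      have hz : ∀ a b : ZMod 2, (0 : ZMod 2) = a + b → (a = 1 ↔ b = 1) := by decide
      simpa using hz _ _ hkey
    | true =>
      rw [hs] at hkey
      norm_num at hkey
      have hz : ∀ a b : ZMod 2, (1 : ZMod 2) = a + b → ¬(a = 1 ↔ b = 1) := by decide
      simpa using hz _ _ hkey
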